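/- Let ξ ∈ C with [Q(ξ):Q] > 2, and suppose there is c > 0 such that for all sufficiently large X there is a nonzero P ∈ Z[T] of degree ≤ 2 with H(P) ≤ X and |P(ξ)| ≤ c X^{-γ²}. Let (X_i), (P_i) be the minimal sequences (H(P_i) = X_i, |P_i(ξ)| minimal for heights < X_{i+1}). Then for any c₁ > c and all sufficiently large indices i for which P_{i-1}, P_i, P_{i+1} are linearly independent over Q, one has X_i^γ ≤ 2 c₁ X_{i+1}. -/

import Mathlib

open Polynomial

/-- Height of an integer polynomial of degree at most 2, as an integer. -/
def htZ (P : Polynomial ℤ) : ℤ :=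
  max |P.coeff 0| (max |P.coeff 1| |P.coeff 2|)

/-- The golden ratio. -/
noncomputable def gr : ℝ := (1 + Real.sqrt 5) / 2

open Filter

lemma sqrt5_gt : (2:ℝ) < Real.sqrt 5 := by
  have : (2:ℝ) = Real.sqrt 4 := by
    rw [show (4:ℝ) = 2^2 by norm_num, Real.sqrt_sq (by norm_num)]
  rw [this]
  exact Real.sqrt_lt_sqrt (by norm_num) (by norm_num)

lemma gr_gt_one : 1 < gr := by
  have := sqrt5_gt; unfold gr; linarith

lemma gr_sq : gr ^ 2 = gr + 1 := by
  have h5 : Real.sqrt 5 ^ 2 = 5 := Real.sq_sqrt (by norm_num)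
  unfold gr; field_simp; nlinarith [h5]

lemma aeval_deg2 (ξ : ℂ) (P : Polynomial ℤ) (h : P.natDegree ≤ 2) :
    aeval ξ P = (P.coeff 0 : ℂ) + (P.coeff 1 : ℂ) * ξ + (P.coeff 2 : ℂ) * ξ ^ 2 := by
  have hlt : P.natDegree < 3 := by omega
  conv_lhs => rw [Polynomial.as_sum_range' P 3 hlt]
  simp [Finset.sum_range_succ, mul_comm]

lemma detq_ne_zero (p₀ p₁ p₂ : Polynomial ℚ)
    (h₀ : p₀.natDegree ≤ 2) (h₁ : p₁.natDegree ≤ 2) (h₂ : p₂.natDegree ≤ 2)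
    (h : LinearIndependent ℚ ![p₀, p₁, p₂]) :
    (p₀.coeff 0) * (p₁.coeff 1 * p₂.coeff 2 - p₁.coeff 2 * p₂.coeff 1)
      - (p₀.coeff 1) * (p₁.coeff 0 * p₂.coeff 2 - p₁.coeff 2 * p₂.coeff 0)
      + (p₀.coeff 2) * (p₁.coeff 0 * p₂.coeff 1 - p₁.coeff 1 * p₂.coeff 0) ≠ 0 := by
  set A : Matrix (Fin 3) (Fin 3) ℚ := Matrix.of
    ![![p₀.coeff 0, p₀.coeff 1, p₀.coeff 2],
      ![p₁.coeff 0, p₁.coeff 1, p₁.coeff 2],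
      ![p₂.coeff 0, p₂.coeff 1, p₂.coeff 2]] with hA
  have hrows : LinearIndependent ℚ (fun j => A j) := by
    rw [Fintype.linearIndependent_iff]
    intro g hg
    have hQ : g 0 • p₀ + g 1 • p₁ + g 2 • p₂ = 0 := by
      have hgk : ∀ k : Fin 3, g 0 * A 0 k + g 1 * A 1 k + g 2 * A 2 k = 0 := by
        intro k
        have := congrFun hg k
        simpa [Fin.sum_univ_three] using this
      ext n
      simp only [Polynomial.coeff_add, Polynomial.coeff_smul, Polynomial.coeff_zero,
        smul_eq_mul]
      match n with
      | 0 => simpa [hA] using hgk 0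
      | 1 => simpa [hA] using hgk 1
      | 2 => simpa [hA] using hgk 2
      | (n+3) =>
        rw [Polynomial.coeff_eq_zero_of_natDegree_lt (by omega),
          Polynomial.coeff_eq_zero_of_natDegree_lt (by omega),
          Polynomial.coeff_eq_zero_of_natDegree_lt (by omega)]
        ring
    have := Fintype.linearIndependent_iff.mp h g (by
      simpa [Fin.sum_univ_three] using hQ)
    exact this
  have hu : IsUnit A := Matrix.linearIndependent_rows_iff_isUnit.mp hrows
  have hdet : A.det ≠ 0 := ((Matrix.isUnit_iff_isUnit_det A).mp hu).ne_zero
  have : A.det = (p₀.coeff 0) * (p₁.coeff 1 * p₂.coeff 2 - p₁.coeff 2 * p₂.coeff 1)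
      - (p₀.coeff 1) * (p₁.coeff 0 * p₂.coeff 2 - p₁.coeff 2 * p₂.coeff 0)
      + (p₀.coeff 2) * (p₁.coeff 0 * p₂.coeff 1 - p₁.coeff 1 * p₂.coeff 0) := by
    rw [Matrix.det_fin_three]; simp [hA]; ring
  rwa [this] at hdet

lemma evb (c c' : ℝ) (hcc' : c < c') :
    ∃ M : ℝ, ∀ x : ℝ, M ≤ x → 2 ≤ x →
      c * (x - 1) ^ (-(gr ^ 2)) ≤ c' * x ^ (-(gr ^ 2)) := by
  have t1 : Tendsto (fun x : ℝ => 1 - 1 / x) atTop (nhds 1) := by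
    have := tendsto_inv_atTop_zero (𝕜 := ℝ)
    simpa [one_div] using (tendsto_const_nhds (x := (1:ℝ))).sub this
  have cont : ContinuousAt (fun t : ℝ => c * t ^ (-(gr ^ 2))) 1 :=
    continuousAt_const.mul (Real.continuousAt_rpow_const 1 _ (Or.inl one_ne_zero))
  have t2 : Tendsto (fun x : ℝ => c * (1 - 1 / x) ^ (-(gr ^ 2))) atTop (nhds c) := by
    have := cont.tendsto.comp t1
    simpa [Function.comp_def] using this
  have hev : ∀ᶠ x in atTop, c * (1 - 1 / x) ^ (-(gr ^ 2)) < c' :=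
    t2.eventually_lt_const hcc'
  obtain ⟨M, hM⟩ := eventually_atTop.mp hev
  refine ⟨M, fun x hMx h2x => ?_⟩
  have hxpos : (0:ℝ) < x := by linarith
  have h1x : 0 ≤ 1 - 1 / x := by
    have : 1 / x ≤ 1 / 2 := by
      apply one_div_le_one_div_of_le <;> linarith
    linarith
  have hsplit : (x - 1) ^ (-(gr ^ 2)) = (1 - 1 / x) ^ (-(gr ^ 2)) * x ^ (-(gr ^ 2)) := by
    rw [← Real.mul_rpow h1x (le_of_lt hxpos)]
    congr 1
    field_simp
  rw [hsplit, ← mul_assoc]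
  exact mul_le_mul_of_nonneg_right (le_of_lt (hM x hMx)) (Real.rpow_nonneg (le_of_lt hxpos) _)

lemma evc (c' ε : ℝ) (hε : 0 < ε) :
    ∃ M : ℝ, ∀ x : ℝ, M ≤ x → 4 * c' * x ^ (1 - gr) ≤ ε := by
  have t1 : Tendsto (fun x : ℝ => 4 * c' * x ^ (1 - gr)) atTop (nhds 0) := by
    have h := tendsto_rpow_neg_atTop (y := gr - 1) (by have := gr_gt_one; linarith)
    have : Tendsto (fun x : ℝ => 4 * c' * x ^ (-(gr - 1))) atTop (nhds (4 * c' * 0)) :=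
      (tendsto_const_nhds (x := 4 * c')).mul h
    simpa [show -(gr - 1) = 1 - gr by ring] using this
  have hev : ∀ᶠ x in atTop, 4 * c' * x ^ (1 - gr) < ε := t1.eventually_lt_const hε
  obtain ⟨M, hM⟩ := eventually_atTop.mp hev
  exact ⟨M, fun x hx => le_of_lt (hM x hx)⟩

lemma minor_bound (u v w z X Y : ℝ) (hu : |u| ≤ X) (hv : |v| ≤ Y) (hw : |w| ≤ X)
    (hz : |z| ≤ Y) (hX : 0 ≤ X) (hY : 0 ≤ Y) : |u * v - w * z| ≤ 2 * (X * Y) := by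
  have h1 : |u * v| ≤ X * Y := by
    rw [abs_mul]; exact mul_le_mul hu hv (abs_nonneg _) hX
  have h2 : |w * z| ≤ X * Y := by
    rw [abs_mul]; exact mul_le_mul hw hz (abs_nonneg _) hX
  calc |u * v - w * z| ≤ |u * v| + |w * z| := abs_sub _ _
    _ ≤ 2 * (X * Y) := by linarith

lemma final_step (c' c₁ x1 x2 : ℝ) (hc' : 0 < c') (hc₁ : c' < c₁)
    (hx1 : 2 ≤ x1) (hx12 : x1 ≤ x2)
    (hmaster : 1 ≤ 2 * c' * x1 ^ (-(gr ^ 2)) * x1 * x2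
      + 4 * c' * x2 ^ (-(gr ^ 2)) * x1 * x2)
    (hc3 : 4 * c' * x2 ^ (1 - gr) ≤ 1 - c' / c₁) : x1 ^ gr ≤ 2 * c₁ * x2 := by
  have hx1p : (0:ℝ) < x1 := by linarith
  have hx2p : (0:ℝ) < x2 := by linarith
  have key1 : x1 ^ (-(gr ^ 2)) * x1 = x1 ^ (-gr) := by
    nth_rewrite 2 [← Real.rpow_one x1]
    rw [← Real.rpow_add hx1p]
    congr 1
    rw [gr_sq]; ring
  have key2 : x2 ^ (-(gr ^ 2)) * x2 * x2 = x2 ^ (1 - gr) := by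
    nth_rewrite 2 [← Real.rpow_one x2]
    nth_rewrite 3 [← Real.rpow_one x2]
    rw [mul_assoc, ← Real.rpow_add hx2p, ← Real.rpow_add hx2p]
    congr 1
    rw [gr_sq]; ring
  have hsecond : 4 * c' * x2 ^ (-(gr ^ 2)) * x1 * x2 ≤ 4 * c' * x2 ^ (1 - gr) := by
    rw [← key2]
    have hx2e : (0:ℝ) < x2 ^ (-(gr ^ 2)) := Real.rpow_pos_of_pos hx2p _
    nlinarith [mul_nonneg (mul_nonneg (mul_nonneg (by linarith : (0:ℝ) ≤ 4*c') hx2e.le) hx2p.le) (by linarith : (0:ℝ) ≤ x2 - x1)]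
  have hmaster2 : 1 ≤ 2 * c' * x1 ^ (-gr) * x2 + (1 - c' / c₁) := by
    have : 2 * c' * x1 ^ (-(gr ^ 2)) * x1 * x2 = 2 * c' * x1 ^ (-gr) * x2 := by
      rw [← key1]; ring
    linarith [this ▸ hmaster]
  have h3 : c' / c₁ ≤ 2 * c' * x1 ^ (-gr) * x2 := by linarith
  have hinv : x1 ^ (-gr) = (x1 ^ gr)⁻¹ := Real.rpow_neg (le_of_lt hx1p) gr
  set u := x1 ^ gr with hu
  have hup : 0 < u := Real.rpow_pos_of_pos hx1p _
  rw [hinv] at h3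
  have h4 : u * (c' / c₁) ≤ u * (2 * c' * u⁻¹ * x2) := by
    exact mul_le_mul_of_nonneg_left h3 (le_of_lt hup)
  have h5 : u * (2 * c' * u⁻¹ * x2) = 2 * c' * x2 := by
    field_simp
  rw [h5] at h4
  have hc₁p : 0 < c₁ := by linarith
  rw [div_eq_mul_inv] at h4
  -- u * (c' * c₁⁻¹) ≤ 2 * c' * x2  ⇒  u ≤ 2 * c₁ * x2
  have h6 : u * c' ≤ 2 * c' * x2 * c₁ := by
    have := mul_le_mul_of_nonneg_right h4 (le_of_lt hc₁p)
    calc u * c' = u * (c' * c₁⁻¹) * c₁ := by field_simp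
      _ ≤ 2 * c' * x2 * c₁ := this
  nlinarith [h6]

set_option maxHeartbeats 1000000 in
theorem height_growth_from_independence (ξ : ℂ)
    (hξ : ∀ P : Polynomial ℤ, P ≠ 0 → P.degree ≤ 2 → aeval ξ P ≠ 0)
    (c : ℝ) (hc : 0 < c)
    (happrox : ∃ X₀ : ℝ, ∀ Y : ℝ, X₀ ≤ Y →
      ∃ P : Polynomial ℤ, P ≠ 0 ∧ P.degree ≤ 2 ∧ (htZ P : ℝ) ≤ Y ∧
        ‖aeval ξ P‖ ≤ c * Y ^ (-(gr ^ 2)))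
    (Xs : ℕ → ℕ) (Ps : ℕ → Polynomial ℤ)
    (hmono : StrictMono Xs) (hpos : ∀ i, 0 < Xs i)
    (hne : ∀ i, Ps i ≠ 0) (hdeg : ∀ i, (Ps i).degree ≤ 2)
    (hht : ∀ i, htZ (Ps i) = Xs i)
    (hdec : ∀ i, ‖aeval ξ (Ps (i + 1))‖ < ‖aeval ξ (Ps i)‖)
    (hmin : ∀ i, ∀ P : Polynomial ℤ, P ≠ 0 → P.degree ≤ 2 → htZ P < Xs (i + 1) →
      ‖aeval ξ (Ps i)‖ ≤ ‖aeval ξ P‖) :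
    ∀ c₁ : ℝ, c < c₁ → ∃ N : ℕ, ∀ i ≥ N,
      LinearIndependent ℚ
        ![(Ps i).map (Int.castRingHom ℚ), (Ps (i + 1)).map (Int.castRingHom ℚ),
          (Ps (i + 2)).map (Int.castRingHom ℚ)] →
      (Xs (i + 1) : ℝ) ^ gr ≤ 2 * c₁ * (Xs (i + 2) : ℝ) := by
  intro c₁ hcc₁
  obtain ⟨X₀, hX₀⟩ := happrox
  set c' : ℝ := (c + c₁) / 2 with hc'def
  have hc'pos : 0 < c' := by rw [hc'def]; linarith
  have hcc' : c < c' := by rw [hc'def]; linarith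
  have hc'c₁ : c' < c₁ := by rw [hc'def]; linarith
  obtain ⟨Mb, hMb⟩ := evb c c' hcc'
  have hεpos : 0 < 1 - c' / c₁ := by
    have hc₁p : 0 < c₁ := by linarith
    have : c' / c₁ < 1 := (div_lt_one hc₁p).mpr hc'c₁
    linarith
  obtain ⟨Mc, hMc⟩ := evc c' _ hεpos
  set R : ℝ := max (max (X₀ + 1) Mb) (max Mc 2) with hRdef
  refine ⟨⌈R⌉₊, fun i hi hli => ?_⟩
  have hXge : ∀ j : ℕ, ⌈R⌉₊ ≤ j → R ≤ (Xs j : ℝ) := by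
    intro j hj
    have h1 : (j : ℝ) ≤ (Xs j : ℝ) := by exact_mod_cast hmono.le_apply
    have h2 : R ≤ (⌈R⌉₊ : ℝ) := Nat.le_ceil R
    have h3 : ((⌈R⌉₊ : ℕ) : ℝ) ≤ (j : ℝ) := by exact_mod_cast hj
    linarith
  have hx1R : R ≤ (Xs (i+1) : ℝ) := hXge (i+1) (by omega)
  have hx2R : R ≤ (Xs (i+2) : ℝ) := hXge (i+2) (by omega)
  have hR2 : (2:ℝ) ≤ R := le_trans (le_max_right Mc 2) (le_max_right _ _)
  have hRMb : Mb ≤ R := le_trans (le_max_right (X₀+1) Mb) (le_max_left _ _)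
  have hRMc : Mc ≤ R := le_trans (le_max_left Mc 2) (le_max_right _ _)
  have hRX₀ : X₀ + 1 ≤ R := le_trans (le_max_left (X₀+1) Mb) (le_max_left _ _)
  have hx1two : (2:ℝ) ≤ (Xs (i+1) : ℝ) := le_trans hR2 hx1R
  have hx2two : (2:ℝ) ≤ (Xs (i+2) : ℝ) := le_trans hR2 hx2R
  have hx1Mb : Mb ≤ (Xs (i+1) : ℝ) := le_trans hRMb hx1R
  have hx2Mb : Mb ≤ (Xs (i+2) : ℝ) := le_trans hRMb hx2R
  have hx2Mc : Mc ≤ (Xs (i+2) : ℝ) := le_trans hRMc hx2R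
  have hX₀x1 : X₀ ≤ (Xs (i+1) : ℝ) - 1 := by linarith
  have hX₀x2 : X₀ ≤ (Xs (i+2) : ℝ) - 1 := by linarith
  have hx01 : (Xs i : ℝ) ≤ (Xs (i+1) : ℝ) := by
    exact_mod_cast (hmono (by omega : i < i+1)).le
  have hx12 : (Xs (i+1) : ℝ) ≤ (Xs (i+2) : ℝ) := by
    exact_mod_cast (hmono (by omega : i+1 < i+2)).le
  have hx0pos : (0:ℝ) < (Xs i : ℝ) := by exact_mod_cast hpos i
  have hx1pos : (0:ℝ) < (Xs (i+1) : ℝ) := by linarith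
  have hx2pos : (0:ℝ) < (Xs (i+2) : ℝ) := by linarith
  -- minimality + approximation bound
  have hδ : ∀ j : ℕ, X₀ ≤ (Xs (j+1) : ℝ) - 1 →
      ‖aeval ξ (Ps j)‖ ≤ c * ((Xs (j+1) : ℝ) - 1) ^ (-(gr ^ 2)) := by
    intro j hj
    obtain ⟨P, hPne, hPdeg, hPht, hPv⟩ := hX₀ _ hj
    have hlt : htZ P < (Xs (j+1) : ℤ) := by
      have h1 : (htZ P : ℝ) < ((Xs (j+1) : ℤ) : ℝ) := by push_cast; linarith
      exact_mod_cast h1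
    exact le_trans (hmin j P hPne hPdeg hlt) hPv
  -- coefficient bounds
  have hcoeff : ∀ j : ℕ, |((Ps j).coeff 0 : ℝ)| ≤ (Xs j : ℝ) ∧
      |((Ps j).coeff 1 : ℝ)| ≤ (Xs j : ℝ) ∧ |((Ps j).coeff 2 : ℝ)| ≤ (Xs j : ℝ) := by
    intro j
    have h0 : |(Ps j).coeff 0| ≤ (Xs j : ℤ) := by
      rw [← hht j]; exact le_max_left _ _
    have h1 : |(Ps j).coeff 1| ≤ (Xs j : ℤ) := by
      rw [← hht j]; exact le_trans (le_max_left _ _) (le_max_right _ _)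
    have h2 : |(Ps j).coeff 2| ≤ (Xs j : ℤ) := by
      rw [← hht j]; exact le_trans (le_max_right _ _) (le_max_right _ _)
    exact ⟨by exact_mod_cast h0, by exact_mod_cast h1, by exact_mod_cast h2⟩
  have hnd : ∀ j, (Ps j).natDegree ≤ 2 :=
    fun j => Polynomial.natDegree_le_iff_degree_le.mpr (hdeg j)
  -- the determinant
  have hmapdeg : ∀ j : ℕ, ((Ps j).map (Int.castRingHom ℚ)).natDegree ≤ 2 :=
    fun j => le_trans Polynomial.natDegree_map_le (hnd j)
  have hdq := detq_ne_zero _ _ _ (hmapdeg i) (hmapdeg (i+1)) (hmapdeg (i+2)) hli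
  simp only [Polynomial.coeff_map, eq_intCast] at hdq
  set D : ℤ := (Ps i).coeff 0 *
        ((Ps (i+1)).coeff 1 * (Ps (i+2)).coeff 2 - (Ps (i+1)).coeff 2 * (Ps (i+2)).coeff 1)
      - (Ps i).coeff 1 *
        ((Ps (i+1)).coeff 0 * (Ps (i+2)).coeff 2 - (Ps (i+1)).coeff 2 * (Ps (i+2)).coeff 0)
      + (Ps i).coeff 2 *
        ((Ps (i+1)).coeff 0 * (Ps (i+2)).coeff 1 - (Ps (i+1)).coeff 1 * (Ps (i+2)).coeff 0)
    with hDdef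
  have hDne : D ≠ 0 := by
    intro h0
    apply hdq
    have : ((D : ℤ) : ℚ) = 0 := by rw [h0]; norm_num
    rw [hDdef] at this
    push_cast at this
    linear_combination this
  have hD1 : (1:ℝ) ≤ |(D:ℝ)| := by exact_mod_cast Int.one_le_abs hDne
  have hvj : ∀ j : ℕ, (aeval ξ (Ps j) : ℂ) =
      ((Ps j).coeff 0 : ℂ) + ((Ps j).coeff 1 : ℂ) * ξ + ((Ps j).coeff 2 : ℂ) * ξ ^ 2 :=
    fun j => aeval_deg2 ξ _ (hnd j)
  have hDC : (D : ℂ) =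
      aeval ξ (Ps i) * (((Ps (i+1)).coeff 1 * (Ps (i+2)).coeff 2
        - (Ps (i+1)).coeff 2 * (Ps (i+2)).coeff 1 : ℤ) : ℂ)
      - aeval ξ (Ps (i+1)) * (((Ps i).coeff 1 * (Ps (i+2)).coeff 2
        - (Ps i).coeff 2 * (Ps (i+2)).coeff 1 : ℤ) : ℂ)
      + aeval ξ (Ps (i+2)) * (((Ps i).coeff 1 * (Ps (i+1)).coeff 2
        - (Ps i).coeff 2 * (Ps (i+1)).coeff 1 : ℤ) : ℂ) := by
    rw [hvj i, hvj (i+1), hvj (i+2), hDdef]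
    push_cast
    ring
  -- triangle inequality bound
  have htri : (1:ℝ) ≤
      ‖aeval ξ (Ps i)‖ * (2 * ((Xs (i+1) : ℝ) * (Xs (i+2) : ℝ)))
      + ‖aeval ξ (Ps (i+1))‖ * (2 * ((Xs i : ℝ) * (Xs (i+2) : ℝ)))
      + ‖aeval ξ (Ps (i+2))‖ * (2 * ((Xs i : ℝ) * (Xs (i+1) : ℝ))) := by
    have m0 : ‖((((Ps (i+1)).coeff 1 * (Ps (i+2)).coeff 2
        - (Ps (i+1)).coeff 2 * (Ps (i+2)).coeff 1 : ℤ)) : ℂ)‖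
        ≤ 2 * ((Xs (i+1) : ℝ) * (Xs (i+2) : ℝ)) := by
      rw [Complex.norm_intCast]
      push_cast
      exact minor_bound _ _ _ _ _ _ (hcoeff (i+1)).2.1 (hcoeff (i+2)).2.2
        (hcoeff (i+1)).2.2 (hcoeff (i+2)).2.1 (le_of_lt hx1pos) (le_of_lt hx2pos)
    have m1 : ‖((((Ps i).coeff 1 * (Ps (i+2)).coeff 2
        - (Ps i).coeff 2 * (Ps (i+2)).coeff 1 : ℤ)) : ℂ)‖
        ≤ 2 * ((Xs i : ℝ) * (Xs (i+2) : ℝ)) := by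
      rw [Complex.norm_intCast]
      push_cast
      exact minor_bound _ _ _ _ _ _ (hcoeff i).2.1 (hcoeff (i+2)).2.2
        (hcoeff i).2.2 (hcoeff (i+2)).2.1 (le_of_lt hx0pos) (le_of_lt hx2pos)
    have m2 : ‖((((Ps i).coeff 1 * (Ps (i+1)).coeff 2
        - (Ps i).coeff 2 * (Ps (i+1)).coeff 1 : ℤ)) : ℂ)‖
        ≤ 2 * ((Xs i : ℝ) * (Xs (i+1) : ℝ)) := by
      rw [Complex.norm_intCast]
      push_cast
      exact minor_bound _ _ _ _ _ _ (hcoeff i).2.1 (hcoeff (i+1)).2.2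
        (hcoeff i).2.2 (hcoeff (i+1)).2.1 (le_of_lt hx0pos) (le_of_lt hx1pos)
    calc (1:ℝ) ≤ |(D:ℝ)| := hD1
      _ = ‖(D:ℂ)‖ := (Complex.norm_intCast D).symm
      _ ≤ ‖aeval ξ (Ps i) * (((Ps (i+1)).coeff 1 * (Ps (i+2)).coeff 2
            - (Ps (i+1)).coeff 2 * (Ps (i+2)).coeff 1 : ℤ) : ℂ)‖
          + ‖aeval ξ (Ps (i+1)) * (((Ps i).coeff 1 * (Ps (i+2)).coeff 2
            - (Ps i).coeff 2 * (Ps (i+2)).coeff 1 : ℤ) : ℂ)‖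
          + ‖aeval ξ (Ps (i+2)) * (((Ps i).coeff 1 * (Ps (i+1)).coeff 2
            - (Ps i).coeff 2 * (Ps (i+1)).coeff 1 : ℤ) : ℂ)‖ := by
        rw [hDC]
        refine le_trans (norm_add_le _ _) ?_
        exact add_le_add (norm_sub_le (E := ℂ) _ _) le_rfl
      _ ≤ ‖aeval ξ (Ps i)‖ * (2 * ((Xs (i+1) : ℝ) * (Xs (i+2) : ℝ)))
          + ‖aeval ξ (Ps (i+1))‖ * (2 * ((Xs i : ℝ) * (Xs (i+2) : ℝ)))
          + ‖aeval ξ (Ps (i+2))‖ * (2 * ((Xs i : ℝ) * (Xs (i+1) : ℝ))) := by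
        rw [norm_mul, norm_mul, norm_mul]
        exact add_le_add (add_le_add
          (mul_le_mul_of_nonneg_left m0 (norm_nonneg _))
          (mul_le_mul_of_nonneg_left m1 (norm_nonneg _)))
          (mul_le_mul_of_nonneg_left m2 (norm_nonneg _))
  -- master inequality
  have hA : ‖aeval ξ (Ps i)‖ ≤ c' * (Xs (i+1) : ℝ) ^ (-(gr ^ 2)) :=
    le_trans (hδ i hX₀x1) (hMb _ hx1Mb hx1two)
  have hB : ‖aeval ξ (Ps (i+1))‖ ≤ c' * (Xs (i+2) : ℝ) ^ (-(gr ^ 2)) :=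
    le_trans (hδ (i+1) hX₀x2) (hMb _ hx2Mb hx2two)
  have hB2 : ‖aeval ξ (Ps (i+2))‖ ≤ c' * (Xs (i+2) : ℝ) ^ (-(gr ^ 2)) :=
    le_trans (le_of_lt (hdec (i+1))) hB
  have he1 : (0:ℝ) < (Xs (i+1) : ℝ) ^ (-(gr ^ 2)) := Real.rpow_pos_of_pos hx1pos _
  have he2 : (0:ℝ) < (Xs (i+2) : ℝ) ^ (-(gr ^ 2)) := Real.rpow_pos_of_pos hx2pos _
  have hmaster : 1 ≤ 2 * c' * (Xs (i+1) : ℝ) ^ (-(gr ^ 2)) * (Xs (i+1) : ℝ) * (Xs (i+2) : ℝ)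
      + 4 * c' * (Xs (i+2) : ℝ) ^ (-(gr ^ 2)) * (Xs (i+1) : ℝ) * (Xs (i+2) : ℝ) := by
    have t0 := mul_le_mul_of_nonneg_right hA
      (by positivity : (0:ℝ) ≤ 2 * ((Xs (i+1) : ℝ) * (Xs (i+2) : ℝ)))
    have t1 := mul_le_mul_of_nonneg_right hB
      (by positivity : (0:ℝ) ≤ 2 * ((Xs i : ℝ) * (Xs (i+2) : ℝ)))
    have t2 := mul_le_mul_of_nonneg_right hB2
      (by positivity : (0:ℝ) ≤ 2 * ((Xs i : ℝ) * (Xs (i+1) : ℝ)))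
    have s1 : c' * (Xs (i+2) : ℝ) ^ (-(gr ^ 2)) * (2 * ((Xs i : ℝ) * (Xs (i+2) : ℝ)))
        ≤ 2 * c' * (Xs (i+2) : ℝ) ^ (-(gr ^ 2)) * (Xs (i+1) : ℝ) * (Xs (i+2) : ℝ) := by
      have hkey : (0:ℝ) ≤ c' * (Xs (i+2) : ℝ) ^ (-(gr ^ 2)) * (Xs (i+2) : ℝ)
          * ((Xs (i+1) : ℝ) - (Xs i : ℝ)) := by
        apply mul_nonneg
        · positivity
        · linarith
      nlinarith [hkey]
    have s2 : c' * (Xs (i+2) : ℝ) ^ (-(gr ^ 2)) * (2 * ((Xs i : ℝ) * (Xs (i+1) : ℝ)))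
        ≤ 2 * c' * (Xs (i+2) : ℝ) ^ (-(gr ^ 2)) * (Xs (i+1) : ℝ) * (Xs (i+2) : ℝ) := by
      have hkey : (0:ℝ) ≤ c' * (Xs (i+2) : ℝ) ^ (-(gr ^ 2)) * (Xs (i+1) : ℝ)
          * ((Xs (i+2) : ℝ) - (Xs i : ℝ)) := by
        apply mul_nonneg
        · positivity
        · linarith
      nlinarith [hkey]
    nlinarith [htri, t0, t1, t2, s1, s2]
  exact final_step c' c₁ _ _ hc'pos hc'c₁ hx1two hx12 hmaster (hMc _ hx2Mc)
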